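/- Let G be a D-regular Bonnet-Myers sharp graph of diameter L, let x_0 ~ x_1 ~ ... ~ x_L be a geodesic with x_0 a pole, and for each j let T_j : B_1(x_{j−1}) → B_1(x_j) be a good optimal transport map. Then for every z ∈ B_1(x_0), setting T^j = T_j ∘ ... ∘ T_1, we have d(x_0, z) + Σ_{j=1}^{L} d(T^{j−1}(z), T^j(z)) + d(T^L(z), x_L) = L. -/
import Mathlib


open Finset

namespace BMS

open scoped Classical

variable {V : Type*}

/-- The uniform probability measure on the closed 1-ball of `x` in a `D`-regular graph. -/
noncomputable def mu (G : SimpleGraph V) (D : ℕ) (x : V) : V → ℝ :=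
  fun v => if G.dist x v ≤ 1 then 1 / (D + 1) else 0

/-- The L¹-Wasserstein distance between `μ_x` and `μ_y`, as an infimum over transport plans. -/
noncomputable def W1 (G : SimpleGraph V) [Fintype V] (D : ℕ) (x y : V) : ℝ :=
  sInf { c : ℝ | ∃ π : V → V → ℝ,
    (∀ u v, 0 ≤ π u v) ∧
    (∀ u, ∑ v, π u v = mu G D x u) ∧
    (∀ v, ∑ u, π u v = mu G D y v) ∧
    c = ∑ u, ∑ v, (G.dist u v : ℝ) * π u v }

/-- Ollivier Ricci curvature (Lin–Lu–Yau normalization for regular graphs). -/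
noncomputable def kappa (G : SimpleGraph V) [Fintype V] (D : ℕ) (x y : V) : ℝ :=
  ((D + 1) / D) * (1 - W1 G D x y)

/-- `G` is Bonnet–Myers sharp: the infimum of the curvature over edges equals `2 / L`. -/
def BMSharp (G : SimpleGraph V) [Fintype V] (D L : ℕ) : Prop :=
  sInf { k : ℝ | ∃ x y, G.Adj x y ∧ k = kappa G D x y } = 2 / (L : ℝ)

/-- Number of neighbors of `y` at distance `k` from `x0`. -/
noncomputable def sphDeg (G : SimpleGraph V) [Fintype V] (x0 y : V) (k : ℕ) : ℕ :=
  (Finset.univ.filter (fun v => G.Adj y v ∧ G.dist x0 v = k)).card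

/-- Number of triangles containing the edge `x ~ y` (common neighbors of `x` and `y`). -/
noncomputable def tri (G : SimpleGraph V) [Fintype V] (x y : V) : ℕ :=
  (Finset.univ.filter (fun v => G.Adj x v ∧ G.Adj y v)).card

/-- A good optimal transport map from `B_1(a)` to `B_1(b)`: a bijection between the 1-balls,
fixing exactly the vertices of `B_1(a) ∩ B_1(b)` (among the domain), whose cost realizes
the Wasserstein distance `W1 (μ_a, μ_b)`. -/
def goodMap (G : SimpleGraph V) [Fintype V] (D : ℕ) (a b : V) (T : V → V) : Prop :=
  Set.BijOn T {v | G.dist a v ≤ 1} {v | G.dist b v ≤ 1} ∧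
  (∀ v, G.dist a v ≤ 1 → (T v = v ↔ G.dist b v ≤ 1)) ∧
  (1 / (D + 1 : ℝ)) *
      ∑ v ∈ Finset.univ.filter (fun v => G.dist a v ≤ 1), (G.dist v (T v) : ℝ) =
    W1 G D a b


/-- Composition `T^j = T_{j-1} ∘ ⋯ ∘ T_0` of the transport maps (`iterT T 0 = id`). -/
def iterT (T : ℕ → V → V) : ℕ → V → V
  | 0 => id
  | n + 1 => T n ∘ iterT T n

section Aux

set_option linter.unusedSectionVars false

variable [Fintype V] {G : SimpleGraph V} {D L : ℕ}

lemma ball_eq (hconn : G.Connected) (y : V) :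
    Finset.univ.filter (fun v => G.dist y v ≤ 1) = insert y (G.neighborFinset y) := by
  ext v
  simp only [Finset.mem_filter, Finset.mem_univ, true_and, Finset.mem_insert,
    SimpleGraph.mem_neighborFinset]
  constructor
  · intro h
    rcases Nat.le_one_iff_eq_zero_or_eq_one.mp h with h0 | h1
    · exact Or.inl ((hconn.dist_eq_zero_iff).mp h0).symm
    · exact Or.inr (SimpleGraph.dist_eq_one_iff_adj.mp h1)
  · rintro (rfl | h)
    · simp [SimpleGraph.dist_self]
    · exact le_of_eq (SimpleGraph.dist_eq_one_iff_adj.mpr h)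

lemma ball_card (hconn : G.Connected) (hreg : G.IsRegularOfDegree D) (y : V) :
    (Finset.univ.filter (fun v => G.dist y v ≤ 1)).card = D + 1 := by
  rw [ball_eq hconn, Finset.card_insert_of_notMem (by simp),
    SimpleGraph.card_neighborFinset_eq_degree, hreg y]

lemma sum_dist_ball (hconn : G.Connected) (hreg : G.IsRegularOfDegree D) (y : V) :
    ∑ v ∈ Finset.univ.filter (fun v => G.dist y v ≤ 1), G.dist y v = D := by
  rw [ball_eq hconn, Finset.sum_insert (by simp), SimpleGraph.dist_self]
  rw [Finset.sum_congr rfl (fun v hv => SimpleGraph.dist_eq_one_iff_adj.mpr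
    (by simpa using hv))]
  simp [SimpleGraph.card_neighborFinset_eq_degree, hreg y]

lemma mu_sum (hconn : G.Connected) (hreg : G.IsRegularOfDegree D) (y : V) :
    ∑ v, mu G D y v = 1 := by
  simp only [mu]
  rw [← Finset.sum_filter, Finset.sum_const, ball_card hconn hreg, nsmul_eq_mul]
  have : ((D : ℝ) + 1) ≠ 0 := by positivity
  push_cast
  field_simp

lemma mu_nonneg (G : SimpleGraph V) (D : ℕ) (x v : V) : 0 ≤ mu G D x v := by
  unfold mu; positivity

lemma W1_bddBelow (G : SimpleGraph V) (D : ℕ) (x y : V) :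
    BddBelow { c : ℝ | ∃ π : V → V → ℝ,
      (∀ u v, 0 ≤ π u v) ∧
      (∀ u, ∑ v, π u v = mu G D x u) ∧
      (∀ v, ∑ u, π u v = mu G D y v) ∧
      c = ∑ u, ∑ v, (G.dist u v : ℝ) * π u v } := by
  refine ⟨0, ?_⟩
  rintro c ⟨π, hπ, -, -, rfl⟩
  exact Finset.sum_nonneg fun u _ => Finset.sum_nonneg fun v _ =>
    mul_nonneg (Nat.cast_nonneg _) (hπ u v)

lemma W1_le_L (hconn : G.Connected) (hreg : G.IsRegularOfDegree D)
    (hL : 0 < L) (hdiam : G.diam = L) (x y : V) : W1 G D x y ≤ L := by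
  have hmem : (∑ u, ∑ v, (G.dist u v : ℝ) * (mu G D x u * mu G D y v)) ∈
      { c : ℝ | ∃ π : V → V → ℝ,
        (∀ u v, 0 ≤ π u v) ∧
        (∀ u, ∑ v, π u v = mu G D x u) ∧
        (∀ v, ∑ u, π u v = mu G D y v) ∧
        c = ∑ u, ∑ v, (G.dist u v : ℝ) * π u v } := by
    refine ⟨fun u v => mu G D x u * mu G D y v, ?_, ?_, ?_, rfl⟩
    · intro u v; exact mul_nonneg (mu_nonneg _ _ _ _) (mu_nonneg _ _ _ _)
    · intro u; rw [← Finset.mul_sum, mu_sum hconn hreg, mul_one]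
    · intro v; rw [← Finset.sum_mul, mu_sum hconn hreg, one_mul]
  have h0 : W1 G D x y ≤ ∑ u, ∑ v, (G.dist u v : ℝ) * (mu G D x u * mu G D y v) :=
    csInf_le (W1_bddBelow G D x y) hmem
  refine h0.trans ?_
  have hdub : ∀ u v : V, (G.dist u v : ℝ) ≤ L := by
    intro u v
    have hne : G.diam ≠ 0 := by omega
    have := SimpleGraph.dist_le_diam (G := G)
      (SimpleGraph.ediam_ne_top_of_diam_ne_zero hne) (u := u) (v := v)
    rw [hdiam] at this; exact_mod_cast this
  calc ∑ u, ∑ v, (G.dist u v : ℝ) * (mu G D x u * mu G D y v)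
      ≤ ∑ u, ∑ v, (L : ℝ) * (mu G D x u * mu G D y v) := by
        refine Finset.sum_le_sum fun u _ => Finset.sum_le_sum fun v _ => ?_
        exact mul_le_mul_of_nonneg_right (hdub u v)
          (mul_nonneg (mu_nonneg _ _ _ _) (mu_nonneg _ _ _ _))
    _ = L := by
        have h1 : ∀ u, ∑ v, (L:ℝ) * (mu G D x u * mu G D y v) = (L:ℝ) * mu G D x u := by
          intro u
          rw [← Finset.mul_sum, ← Finset.mul_sum, mu_sum hconn hreg, mul_one]
        rw [Finset.sum_congr rfl fun u _ => h1 u, ← Finset.mul_sum, mu_sum hconn hreg, mul_one]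

lemma kappa_lb (hconn : G.Connected) (hreg : G.IsRegularOfDegree D) (hD : 0 < D)
    (hL : 0 < L) (hdiam : G.diam = L) (hBM : BMSharp G D L) {a b : V} (hab : G.Adj a b) :
    2 / (L : ℝ) ≤ kappa G D a b := by
  rw [← hBM]
  refine csInf_le ⟨((D:ℝ)+1)/D * (1 - L), ?_⟩ ⟨a, b, hab, rfl⟩
  rintro k ⟨u, v, huv, rfl⟩
  unfold kappa
  have h := W1_le_L hconn hreg hL hdiam u v
  have hD' : (0:ℝ) < D := by exact_mod_cast hD
  have hpos : (0:ℝ) ≤ ((D:ℝ)+1)/D := by positivity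
  exact mul_le_mul_of_nonneg_left (by linarith) hpos

lemma W1_ub (hconn : G.Connected) (hreg : G.IsRegularOfDegree D) (hD : 0 < D)
    (hL : 0 < L) (hdiam : G.diam = L) (hBM : BMSharp G D L) {a b : V} (hab : G.Adj a b) :
    ((D:ℝ)+1) * W1 G D a b ≤ ((D:ℝ)+1) - 2*(D:ℝ)/(L:ℝ) := by
  have hk := kappa_lb hconn hreg hD hL hdiam hBM hab
  unfold kappa at hk
  have hD' : (0:ℝ) < D := by exact_mod_cast hD
  have hL' : (0:ℝ) < L := by exact_mod_cast hL
  have hDne : (D:ℝ) ≠ 0 := hD'.ne'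
  have hLne : (L:ℝ) ≠ 0 := hL'.ne'
  rw [div_le_iff₀ hL'] at hk
  have hk2 := mul_le_mul_of_nonneg_right hk hD'.le
  field_simp at hk2
  have h3 : ((D:ℝ)+1) * W1 G D a b ≤ (((D:ℝ)+1)*(L:ℝ) - 2*(D:ℝ))/(L:ℝ) := by
    rw [le_div_iff₀ hL']; nlinarith [hk2]
  have h4 : (((D:ℝ)+1)*(L:ℝ) - 2*(D:ℝ))/(L:ℝ) = ((D:ℝ)+1) - 2*(D:ℝ)/(L:ℝ) := by
    field_simp
  linarith [h3, h4.le, h4.ge]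

end Aux

theorem stmt [Fintype V] (G : SimpleGraph V) (hconn : G.Connected)
    (D L : ℕ) (hD : 0 < D) (hL : 0 < L) (hreg : G.IsRegularOfDegree D)
    (hdiam : G.diam = L) (hBM : BMSharp G D L)
    (x : ℕ → V) (hpole : ∃ p, G.dist (x 0) p = L)
    (hadj : ∀ j < L, G.Adj (x j) (x (j + 1)))
    (hgeo : G.dist (x 0) (x L) = L)
    (T : ℕ → V → V) (hT : ∀ j < L, goodMap G D (x j) (x (j + 1)) (T j)) :
    ∀ z : V, G.dist (x 0) z ≤ 1 →
      G.dist (x 0) z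
        + (∑ j ∈ Finset.range L, G.dist (iterT T j z) (iterT T (j + 1) z))
        + G.dist (iterT T L z) (x L) = L := by
  classical
  set B0 := Finset.univ.filter (fun v => G.dist (x 0) v ≤ 1) with hB0
  -- triangle inequality lower bound
  have key : ∀ w : V, ∀ n : ℕ, G.dist (x 0) (iterT T n w) ≤
      G.dist (x 0) w + ∑ j ∈ Finset.range n, G.dist (iterT T j w) (iterT T (j+1) w) := by
    intro w n
    induction n with
    | zero => simp [iterT]
    | succ n ih =>
      rw [Finset.sum_range_succ]
      have htri := hconn.dist_triangle (u := x 0) (v := iterT T n w) (w := iterT T (n+1) w)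
      omega
  have hlb : ∀ w : V, L ≤ G.dist (x 0) w
      + (∑ j ∈ Finset.range L, G.dist (iterT T j w) (iterT T (j + 1) w))
      + G.dist (iterT T L w) (x L) := by
    intro w
    have h1 := key w L
    have h2 := hconn.dist_triangle (u := x 0) (v := iterT T L w) (w := x L)
    omega
  -- the iterated maps are bijections between balls
  have hbij : ∀ j, j ≤ L →
      Set.BijOn (iterT T j) {v | G.dist (x 0) v ≤ 1} {v | G.dist (x j) v ≤ 1} := by
    intro j
    induction j with
    | zero => intro _; simpa [iterT] using Set.bijOn_id {v | G.dist (x 0) v ≤ 1}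
    | succ n ih =>
      intro hn
      exact ((hT n (by omega)).1).comp (ih (by omega))
  have hcoe : ∀ y : V, ((Finset.univ.filter (fun v => G.dist y v ≤ 1) : Finset V) : Set V)
      = {v | G.dist y v ≤ 1} := by intro y; ext v; simp
  have hsum : ∀ j, j ≤ L → ∀ f : V → ℕ,
      ∑ z ∈ B0, f (iterT T j z)
        = ∑ v ∈ Finset.univ.filter (fun v => G.dist (x j) v ≤ 1), f v := by
    intro j hj f
    refine Finset.sum_nbij (iterT T j) ?_ ?_ ?_ (fun a _ => rfl)
    · intro a ha
      have := (hbij j hj).mapsTo (by simpa [hB0] using ha)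
      simpa using this
    · rw [hB0, hcoe]; exact (hbij j hj).injOn
    · rw [hB0, hcoe, hcoe]; exact (hbij j hj).surjOn
  -- cost of each step
  have hDne : ((D:ℝ)+1) ≠ 0 := by positivity
  have hcost : ∀ j, j < L →
      ((∑ z ∈ B0, G.dist (iterT T j z) (iterT T (j+1) z) : ℕ) : ℝ)
        = ((D:ℝ)+1) * W1 G D (x j) (x (j+1)) := by
    intro j hj
    have h1 : ∑ z ∈ B0, G.dist (iterT T j z) (iterT T (j+1) z)
        = ∑ v ∈ Finset.univ.filter (fun v => G.dist (x j) v ≤ 1), G.dist v (T j v) :=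
      hsum j (le_of_lt hj) (fun v => G.dist v (T j v))
    rw [h1]
    have h2 := (hT j hj).2.2
    push_cast
    rw [← h2]
    field_simp
  -- second term bound
  have e2 : ((∑ z ∈ B0, ∑ j ∈ Finset.range L, G.dist (iterT T j z) (iterT T (j+1) z) : ℕ) : ℝ)
      ≤ ((D:ℝ)+1)*(L:ℝ) - 2*(D:ℝ) := by
    rw [Finset.sum_comm]
    have hc : ((∑ j ∈ Finset.range L, ∑ z ∈ B0,
        G.dist (iterT T j z) (iterT T (j+1) z) : ℕ) : ℝ)
        = ∑ j ∈ Finset.range L,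
            ((∑ z ∈ B0, G.dist (iterT T j z) (iterT T (j+1) z) : ℕ) : ℝ) := by
      push_cast; ring
    rw [hc]
    have hL' : (0:ℝ) < L := by exact_mod_cast hL
    calc ∑ j ∈ Finset.range L, ((∑ z ∈ B0, G.dist (iterT T j z) (iterT T (j+1) z) : ℕ) : ℝ)
        = ∑ j ∈ Finset.range L, ((D:ℝ)+1) * W1 G D (x j) (x (j+1)) :=
          Finset.sum_congr rfl fun j hj => hcost j (Finset.mem_range.mp hj)
      _ ≤ ∑ j ∈ Finset.range L, (((D:ℝ)+1) - 2*(D:ℝ)/(L:ℝ)) :=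
          Finset.sum_le_sum fun j hj =>
            W1_ub hconn hreg hD hL hdiam hBM (hadj j (Finset.mem_range.mp hj))
      _ = ((D:ℝ)+1)*(L:ℝ) - 2*(D:ℝ) := by
          rw [Finset.sum_const, Finset.card_range, nsmul_eq_mul]
          field_simp
  -- first and third terms
  have e1 : ∑ z ∈ B0, G.dist (x 0) z = D := by
    rw [hB0]; exact sum_dist_ball hconn hreg (x 0)
  have e3 : ∑ z ∈ B0, G.dist (iterT T L z) (x L) = D := by
    rw [hsum L le_rfl (fun v => G.dist v (x L))]
    rw [Finset.sum_congr rfl (fun v _ => SimpleGraph.dist_comm (G := G) (u := v) (v := x L))]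
    exact sum_dist_ball hconn hreg (x L)
  -- total upper bound
  have htot : ∑ z ∈ B0, (G.dist (x 0) z
      + (∑ j ∈ Finset.range L, G.dist (iterT T j z) (iterT T (j + 1) z))
      + G.dist (iterT T L z) (x L)) ≤ (D+1)*L := by
    have hsplit : ∑ z ∈ B0, (G.dist (x 0) z
        + (∑ j ∈ Finset.range L, G.dist (iterT T j z) (iterT T (j + 1) z))
        + G.dist (iterT T L z) (x L))
        = (∑ z ∈ B0, G.dist (x 0) z)
          + (∑ z ∈ B0, ∑ j ∈ Finset.range L, G.dist (iterT T j z) (iterT T (j+1) z))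
          + (∑ z ∈ B0, G.dist (iterT T L z) (x L)) := by
      rw [Finset.sum_add_distrib, Finset.sum_add_distrib]
    have hR : ((∑ z ∈ B0, (G.dist (x 0) z
        + (∑ j ∈ Finset.range L, G.dist (iterT T j z) (iterT T (j + 1) z))
        + G.dist (iterT T L z) (x L)) : ℕ) : ℝ) ≤ (((D+1)*L : ℕ) : ℝ) := by
      rw [hsplit]
      push_cast [e1, e3]
      have := e2
      push_cast at this
      linarith
    exact_mod_cast hR
  -- combine
  intro z hz
  have hcard : B0.card = D + 1 := by rw [hB0]; exact ball_card hconn hreg (x 0)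
  have hge : ∀ w ∈ B0, L ≤ (G.dist (x 0) w
      + (∑ j ∈ Finset.range L, G.dist (iterT T j w) (iterT T (j + 1) w))
      + G.dist (iterT T L w) (x L)) := fun w _ => hlb w
  have hsum_eq : (∑ _w ∈ B0, L) = ∑ w ∈ B0, (G.dist (x 0) w
      + (∑ j ∈ Finset.range L, G.dist (iterT T j w) (iterT T (j + 1) w))
      + G.dist (iterT T L w) (x L)) := by
    refine le_antisymm (Finset.sum_le_sum hge) ?_
    rw [Finset.sum_const, hcard, smul_eq_mul]
    calc _ ≤ (D+1)*L := htot
      _ = (D+1)*L := rfl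
  have hall := (Finset.sum_eq_sum_iff_of_le hge).mp hsum_eq
  have hz0 : z ∈ B0 := by simp [hB0, hz]
  exact (hall z hz0).symm

end BMS
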